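/- Let d ≥ 1, let x, y ∈ ℝ^d, and let r, s > 0 with dist(x,y) ≥ r. Then the Lebesgue measure of B_s(y) \ B_r(x) is at least half the Lebesgue measure of B_s(y). -/

import Mathlib

open Metric Set MeasureTheory

theorem stmt14 (d : ℕ) (hd : 1 ≤ d) (x y : EuclideanSpace ℝ (Fin d)) (r s : ℝ)
    (hr : 0 < r) (hs : 0 < s) (h : r ≤ dist x y) :
    volume (closedBall y s) / 2 ≤ volume (closedBall y s \ closedBall x r) := by
  set v := x - y with hv
  have hv0 : v ≠ 0 := by
    intro h0
    have : x = y := sub_eq_zero.mp h0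
    rw [this, dist_self] at h
    linarith
  set A : Set (EuclideanSpace ℝ (Fin d)) :=
    closedBall y s ∩ {z | inner ℝ (z - y) v < (0 : ℝ)} with hA
  set A' : Set (EuclideanSpace ℝ (Fin d)) :=
    closedBall y s ∩ {z | (0 : ℝ) < inner ℝ (z - y) v} with hA'
  set H : Set (EuclideanSpace ℝ (Fin d)) := {z | inner ℝ (z - y) v = (0 : ℝ)} with hH
  -- A is contained in the difference
  have hsub : A ⊆ closedBall y s \ closedBall x r := by
    rintro z ⟨hz1, hz2⟩
    refine ⟨hz1, fun hz3 => ?_⟩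
    have hzx : ‖z - x‖ ≤ r := by
      rwa [mem_closedBall, dist_eq_norm] at hz3
    have hxy : ‖x - y‖ = dist x y := (dist_eq_norm x y).symm
    have key : (0 : ℝ) ≤ inner ℝ (z - y) v := by
      have e1 : (inner ℝ (z - y) v : ℝ) = inner ℝ (z - x) v + inner ℝ v v := by
        rw [hv, ← inner_add_left]
        congr 1
        abel
      rw [e1, real_inner_self_eq_norm_sq]
      have h1 : -(‖z - x‖ * ‖v‖) ≤ (inner ℝ (z - x) v : ℝ) := neg_le_of_abs_le (abs_real_inner_le_norm _ _)
      have h2 : ‖z - x‖ * ‖v‖ ≤ ‖v‖ * ‖v‖ := by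
        apply mul_le_mul_of_nonneg_right _ (norm_nonneg v)
        calc ‖z - x‖ ≤ r := hzx
          _ ≤ dist x y := h
          _ = ‖v‖ := by rw [hv, ← hxy]
      nlinarith
    simp only [mem_setOf_eq] at hz2
    linarith
  -- the linear functional is continuous, so sets are measurable
  have hcont : Continuous fun z : EuclideanSpace ℝ (Fin d) => (inner ℝ (z - y) v : ℝ) :=
    (continuous_id.sub continuous_const).inner continuous_const
  have hmA : MeasurableSet A :=
    measurableSet_closedBall.inter (measurableSet_lt hcont.measurable measurable_const)
  -- reflection φ z = (y + y) - z is measure preserving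
  have hmp : MeasurePreserving (fun z : EuclideanSpace ℝ (Fin d) => (y + y) - z)
      volume volume := by
    have := (measurePreserving_add_left (volume : Measure (EuclideanSpace ℝ (Fin d)))
      (y + y)).comp (Measure.measurePreserving_neg volume)
    simpa [Function.comp_def, sub_eq_add_neg] using this
  have hA'eq : A' = (fun z : EuclideanSpace ℝ (Fin d) => (y + y) - z) ⁻¹' A := by
    ext z
    have e : (y + y - z) - y = -(z - y) := by abel
    simp only [hA, hA', mem_inter_iff, mem_preimage, mem_closedBall, mem_setOf_eq,
      dist_eq_norm, e, norm_neg, inner_neg_left]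
    constructor
    · rintro ⟨h1, h2⟩
      exact ⟨h1, by linarith⟩
    · rintro ⟨h1, h2⟩
      exact ⟨h1, by linarith⟩
  have hvolA' : volume A' = volume A := by
    rw [hA'eq, hmp.measure_preimage hmA.nullMeasurableSet]
  -- hyperplane has measure zero
  have hHzero : volume H = 0 := by
    have hHeq : H = ↑(AffineSubspace.mk' y (LinearMap.ker (innerSL ℝ v : EuclideanSpace ℝ (Fin d) →ₗ[ℝ] ℝ))) := by
      ext z
      simp only [hH, mem_setOf_eq, SetLike.mem_coe, AffineSubspace.mem_mk',
        LinearMap.mem_ker, ContinuousLinearMap.coe_coe, innerSL_apply_apply, vsub_eq_sub]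
      rw [real_inner_comm]
    rw [hHeq]
    apply Measure.addHaar_affineSubspace
    intro htop
    have hdir : (AffineSubspace.mk' y (LinearMap.ker (innerSL ℝ v : EuclideanSpace ℝ (Fin d) →ₗ[ℝ] ℝ))).direction = ⊤ := by
      rw [htop]; exact AffineSubspace.direction_top ℝ _ _
    rw [AffineSubspace.direction_mk'] at hdir
    have hvmem : v ∈ LinearMap.ker (innerSL ℝ v : EuclideanSpace ℝ (Fin d) →ₗ[ℝ] ℝ) := by rw [hdir]; trivial
    simp only [LinearMap.mem_ker, ContinuousLinearMap.coe_coe, innerSL_apply_apply] at hvmem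
    exact hv0 (inner_self_eq_zero.mp hvmem)
  -- ball ⊆ A ∪ A' ∪ H
  have hcover : closedBall y s ⊆ A ∪ A' ∪ H := by
    intro z hz
    rcases lt_trichotomy (inner ℝ (z - y) v : ℝ) 0 with hlt | heq | hgt
    · exact Or.inl (Or.inl ⟨hz, hlt⟩)
    · exact Or.inr heq
    · exact Or.inl (Or.inr ⟨hz, hgt⟩)
  have hle : volume (closedBall y s) ≤ 2 * volume A := by
    calc volume (closedBall y s) ≤ volume (A ∪ A' ∪ H) := measure_mono hcover
      _ ≤ volume (A ∪ A') + volume H := measure_union_le _ _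
      _ = volume (A ∪ A') := by rw [hHzero, add_zero]
      _ ≤ volume A + volume A' := measure_union_le _ _
      _ = 2 * volume A := by rw [hvolA', two_mul]
  calc volume (closedBall y s) / 2 ≤ volume A := by
        rw [ENNReal.div_le_iff_le_mul (Or.inl two_ne_zero) (Or.inl (by norm_num))]
        rwa [mul_comm] at hle
    _ ≤ volume (closedBall y s \ closedBall x r) := measure_mono hsub
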